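/- Let l₀, ε ∈ ℝ satisfy ε > 0, 0 < l₀ - ε, and l₀ + ε < 1, and let α ∈ (0,1). Then L_{α, l₀+ε} = l₀ - ε if and only if α = 1/2 + ε / (2·l₀·(1-l₀) + 2·ε²), and likewise U_{α, l₀-ε} = l₀ + ε if and only if α = 1/2 + ε / (2·l₀·(1-l₀) + 2·ε²). -/

import Mathlib

/-- with `0 < l₀ - ε`, `l₀ + ε < 1`, `ε > 0` and `α ∈ (0,1)`:
`L_{α,l₀+ε} = l₀-ε ↔ α = 1/2 + ε/(2l₀(1-l₀)+2ε²)`, and likewise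
`U_{α,l₀-ε} = l₀+ε ↔ α = 1/2 + ε/(2l₀(1-l₀)+2ε²)`. -/
theorem stmt_11 (l₀ ε : ℝ) (hε : 0 < ε) (h1 : 0 < l₀ - ε) (h2 : l₀ + ε < 1)
    (α : ℝ) (hα : α ∈ Set.Ioo (0 : ℝ) 1) :
    ((1 - α) * (l₀ + ε) / (α * (1 - (l₀ + ε)) + (1 - α) * (l₀ + ε)) = l₀ - ε ↔
      α = 1 / 2 + ε / (2 * l₀ * (1 - l₀) + 2 * ε ^ 2)) ∧
    (α * (l₀ - ε) / ((1 - α) * (1 - (l₀ - ε)) + α * (l₀ - ε)) = l₀ + ε ↔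
      α = 1 / 2 + ε / (2 * l₀ * (1 - l₀) + 2 * ε ^ 2)) := by
  obtain ⟨ha1, ha2⟩ := hα
  have hD : 0 < 2 * l₀ * (1 - l₀) + 2 * ε ^ 2 := by nlinarith
  have hD' : l₀ * (1 - l₀) + ε ^ 2 ≠ 0 := by nlinarith
  have hd1 : 0 < α * (1 - (l₀ + ε)) + (1 - α) * (l₀ + ε) := by nlinarith
  have hd2 : 0 < (1 - α) * (1 - (l₀ - ε)) + α * (l₀ - ε) := by nlinarith
  constructor
  · rw [div_eq_iff hd1.ne']
    constructor
    · intro h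
      field_simp [hD']
      linear_combination (-1 : ℝ) * h
    · intro h
      field_simp [hD'] at h
      linear_combination (-(1:ℝ)) * h
  · rw [div_eq_iff hd2.ne']
    constructor
    · intro h
      field_simp [hD']
      linear_combination (1 : ℝ) * h
    · intro h
      field_simp [hD'] at h
      linear_combination ((1:ℝ)) * h
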